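/- With notation as before (t = 3 case): rank(X) = 2n + rank(W^3), where X is the 3n×3n matrix with diagonal blocks W, first superdiagonal blocks B = I + W, and zero elsewhere, W nilpotent over a field of characteristic 0. -/

import Mathlib

open Matrix

/-- mulVec of the block matrix, componentwise. -/
private lemma block_mulVec {F : Type*} [Field F] {n : ℕ}
    (W : Matrix (Fin n) (Fin n) F)
    (X : Matrix (Fin 3 × Fin n) (Fin 3 × Fin n) F)
    (hX : ∀ p q : Fin 3 × Fin n,
      X p q = if p.1 = q.1 then W p.2 q.2
        else if (p.1 : ℕ) + 1 = (q.1 : ℕ) then (1 + W) p.2 q.2 else 0)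
    (v : Fin 3 × Fin n → F) (i : Fin 3) (j : Fin n) :
    X.mulVec v (i, j) =
      ![W.mulVec (fun l => v (0, l)) j + (1 + W).mulVec (fun l => v (1, l)) j,
        W.mulVec (fun l => v (1, l)) j + (1 + W).mulVec (fun l => v (2, l)) j,
        W.mulVec (fun l => v (2, l)) j] i := by
  have : X.mulVec v (i, j)
      = ∑ k : Fin 3, ∑ l : Fin n, X (i, j) (k, l) * v (k, l) := by
    rw [Matrix.mulVec, dotProduct, Fintype.sum_prod_type]
  rw [this, Fin.sum_univ_three]
  simp only [hX]
  fin_cases i <;>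
    simp [Matrix.mulVec, dotProduct, Finset.mul_sum, Finset.sum_add_distrib,
      mul_comm]

theorem rank_block_t3 {F : Type*} [Field F] [CharZero F] {n : ℕ}
    (W : Matrix (Fin n) (Fin n) F) (hW : IsNilpotent W)
    (X : Matrix (Fin 3 × Fin n) (Fin 3 × Fin n) F)
    (hX : ∀ p q : Fin 3 × Fin n,
      X p q = if p.1 = q.1 then W p.2 q.2
        else if (p.1 : ℕ) + 1 = (q.1 : ℕ) then (1 + W) p.2 q.2 else 0) :
    X.rank = 2 * n + (W ^ 3).rank := by
  classical
  set B : Matrix (Fin n) (Fin n) F := 1 + W with hB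
  have hBu : IsUnit B := hW.isUnit_one_add
  have hBd : IsUnit B.det := by
    rwa [← Matrix.isUnit_iff_isUnit_det]
  have hBB : B * B⁻¹ = 1 := Matrix.mul_nonsing_inv B hBd
  have hBB' : B⁻¹ * B = 1 := Matrix.nonsing_inv_mul B hBd
  have hWB : W * B = B * W := by
    rw [hB, mul_add, add_mul, mul_one, one_mul]
  have hcomm : W * B⁻¹ = B⁻¹ * W := by
    calc W * B⁻¹ = (B⁻¹ * B) * W * B⁻¹ := by rw [hBB', one_mul]
      _ = B⁻¹ * (B * W) * B⁻¹ := by rw [mul_assoc B⁻¹ B W]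
      _ = B⁻¹ * (W * B) * B⁻¹ := by rw [hWB]
      _ = B⁻¹ * W * (B * B⁻¹) := by simp only [mul_assoc]
      _ = B⁻¹ * W := by rw [hBB, mul_one]
  have hcube : W * (W * W) = W ^ 3 := by
    rw [pow_succ, pow_two, mul_assoc]
  have key1 : B * (B⁻¹ * W) = W := by rw [← mul_assoc, hBB, one_mul]
  have key2 : B * ((B⁻¹ * W) * (B⁻¹ * W)) = W * (B⁻¹ * W) := by
    rw [← mul_assoc, key1]
  have hMM : (B⁻¹ * W) * (B⁻¹ * W) = B⁻¹ * (B⁻¹ * (W * W)) := by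
    calc (B⁻¹ * W) * (B⁻¹ * W) = B⁻¹ * ((W * B⁻¹) * W) := by simp only [mul_assoc]
      _ = B⁻¹ * ((B⁻¹ * W) * W) := by rw [hcomm]
      _ = B⁻¹ * (B⁻¹ * (W * W)) := by simp only [mul_assoc]
  have key3 : W * ((B⁻¹ * W) * (B⁻¹ * W)) = B⁻¹ * (B⁻¹ * W ^ 3) := by
    rw [hMM]
    calc W * (B⁻¹ * (B⁻¹ * (W * W)))
        = (W * B⁻¹) * (B⁻¹ * (W * W)) := by simp only [mul_assoc]
      _ = (B⁻¹ * W) * (B⁻¹ * (W * W)) := by rw [hcomm]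
      _ = B⁻¹ * ((W * B⁻¹) * (W * W)) := by simp only [mul_assoc]
      _ = B⁻¹ * ((B⁻¹ * W) * (W * W)) := by rw [hcomm]
      _ = B⁻¹ * (B⁻¹ * W ^ 3) := by rw [mul_assoc, hcube]
  have key4 : B * (B * (B⁻¹ * (B⁻¹ * W ^ 3))) = W ^ 3 := by
    calc B * (B * (B⁻¹ * (B⁻¹ * W ^ 3)))
        = B * ((B * B⁻¹) * (B⁻¹ * W ^ 3)) := by simp only [mul_assoc]
      _ = B * (B⁻¹ * W ^ 3) := by rw [hBB, one_mul]
      _ = (B * B⁻¹) * W ^ 3 := by rw [mul_assoc]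
      _ = W ^ 3 := by rw [hBB, one_mul]
  set M : Matrix (Fin n) (Fin n) F := B⁻¹ * W with hM
  -- the embedding matrix Y
  set Y : Matrix (Fin 3 × Fin n) (Fin n) F :=
    Matrix.of (fun p l => ![(1 : Matrix (Fin n) (Fin n) F), -M, M * M] p.1 p.2 l) with hY
  have hYmul : ∀ (x : Fin n → F) (i : Fin 3) (j : Fin n),
      Y.mulVec x (i, j) = (![(1 : Matrix (Fin n) (Fin n) F), -M, M * M] i).mulVec x j := by
    intro x i j
    simp [hY, Matrix.mulVec, dotProduct]
  -- kernel of X equals image of kernel of W^3 under Y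
  have hker : LinearMap.ker X.mulVecLin
      = (LinearMap.ker (W ^ 3).mulVecLin).map Y.mulVecLin := by
    ext v
    simp only [LinearMap.mem_ker, Submodule.mem_map, Matrix.mulVecLin_apply]
    constructor
    · intro hv
      have h0 : ∀ i j, X.mulVec v (i, j) = 0 := by
        intro i j; rw [hv]; rfl
      set v0 : Fin n → F := fun l => v (0, l) with hv0
      set v1 : Fin n → F := fun l => v (1, l) with hv1
      set v2 : Fin n → F := fun l => v (2, l) with hv2
      have e0 : ∀ j, W.mulVec v0 j + B.mulVec v1 j = 0 := fun j => by
        have := block_mulVec W X hX v 0 j; rw [h0 0 j] at this; exact this.symm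
      have e1 : ∀ j, W.mulVec v1 j + B.mulVec v2 j = 0 := fun j => by
        have := block_mulVec W X hX v 1 j; rw [h0 1 j] at this; exact this.symm
      have e2 : ∀ j, W.mulVec v2 j = 0 := fun j => by
        have := block_mulVec W X hX v 2 j; rw [h0 2 j] at this; exact this.symm
      have e0' : B.mulVec v1 = -W.mulVec v0 := by
        funext j; have := e0 j; simpa [eq_neg_iff_add_eq_zero, add_comm] using this
      have e1' : B.mulVec v2 = -W.mulVec v1 := by
        funext j; have := e1 j; simpa [eq_neg_iff_add_eq_zero, add_comm] using this
      have hv1M : v1 = -(M.mulVec v0) := by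
        have : B⁻¹.mulVec (B.mulVec v1) = B⁻¹.mulVec (-W.mulVec v0) := by rw [e0']
        rw [Matrix.mulVec_mulVec, hBB', Matrix.one_mulVec] at this
        rw [this, Matrix.mulVec_neg, Matrix.mulVec_mulVec, hM]
      have hv2M : v2 = (M * M).mulVec v0 := by
        have : B⁻¹.mulVec (B.mulVec v2) = B⁻¹.mulVec (-W.mulVec v1) := by rw [e1']
        rw [Matrix.mulVec_mulVec, hBB', Matrix.one_mulVec] at this
        rw [this, hv1M]
        simp only [Matrix.mulVec_neg, neg_neg, Matrix.mulVec_mulVec, hM, mul_assoc]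
      have hker0 : (W ^ 3).mulVec v0 = 0 := by
        have h2 : W.mulVec v2 = 0 := funext e2
        rw [hv2M, Matrix.mulVec_mulVec, key3] at h2
        have h3 : (B * (B * (B⁻¹ * (B⁻¹ * W ^ 3)))).mulVec v0 = 0 := by
          rw [← Matrix.mulVec_mulVec, ← Matrix.mulVec_mulVec, h2]
          simp
        rwa [key4] at h3
      refine ⟨v0, hker0, ?_⟩
      funext p
      obtain ⟨i, j⟩ := p
      rw [hYmul]
      fin_cases i
      · show (![(1 : Matrix (Fin n) (Fin n) F), -M, M * M] 0 *ᵥ v0) j = v (0, j)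
        simp only [Matrix.cons_val_zero, Matrix.one_mulVec]
        rfl
      · show (![(1 : Matrix (Fin n) (Fin n) F), -M, M * M] 1 *ᵥ v0) j = v (1, j)
        simp only [Matrix.cons_val_one, Matrix.cons_val_zero, Matrix.head_cons, Matrix.neg_mulVec]
        exact (congrFun hv1M j).symm
      · show (![(1 : Matrix (Fin n) (Fin n) F), -M, M * M] 2 *ᵥ v0) j = v (2, j)
        simp only [Matrix.cons_val_two, Matrix.tail_cons, Matrix.head_cons]
        exact (congrFun hv2M j).symm
    · rintro ⟨x, hx, rfl⟩
      funext p
      obtain ⟨i, j⟩ := p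
      have hb := block_mulVec W X hX (Y.mulVec x) i j
      have l0 : (fun l => Y.mulVec x (0, l)) = x := by
        funext l; rw [hYmul]; simp
      have l1 : (fun l => Y.mulVec x (1, l)) = -(M.mulVec x) := by
        funext l; rw [hYmul]; simp [Matrix.neg_mulVec]
      have l2 : (fun l => Y.mulVec x (2, l)) = (M * M).mulVec x := by
        funext l; rw [hYmul]; simp
      rw [hb, l0, l1, l2]
      have c0 : W.mulVec x + B.mulVec (-(M.mulVec x)) = 0 := by
        rw [Matrix.mulVec_neg, Matrix.mulVec_mulVec, key1]
        exact add_neg_cancel _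
      have c1 : W.mulVec (-(M.mulVec x)) + B.mulVec ((M * M).mulVec x) = 0 := by
        rw [Matrix.mulVec_neg, Matrix.mulVec_mulVec, Matrix.mulVec_mulVec, key2]
        exact neg_add_cancel _
      have c2 : W.mulVec ((M * M).mulVec x) = 0 := by
        rw [Matrix.mulVec_mulVec, key3, ← Matrix.mulVec_mulVec, ← Matrix.mulVec_mulVec, hx]
        simp
      fin_cases i
      · simpa using congrFun c0 j
      · simpa using congrFun c1 j
      · simpa using congrFun c2 j
  -- Y.mulVecLin is injective
  have hYinj : Function.Injective Y.mulVecLin := by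
    intro a b hab
    funext l
    have := congrFun hab (0, l)
    simpa [Matrix.mulVecLin_apply, hYmul] using this
  -- kernel dimensions agree
  have hdim : Module.finrank F (LinearMap.ker X.mulVecLin)
      = Module.finrank F (LinearMap.ker (W ^ 3).mulVecLin) := by
    rw [hker]
    exact (Submodule.equivMapOfInjective Y.mulVecLin hYinj _).finrank_eq.symm
  have rn1 := LinearMap.finrank_range_add_finrank_ker X.mulVecLin
  have rn2 := LinearMap.finrank_range_add_finrank_ker (W ^ 3).mulVecLin
  rw [Module.finrank_fintype_fun_eq_card] at rn1 rn2
  simp only [Fintype.card_prod, Fintype.card_fin] at rn1 rn2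
  have hr1 : X.rank = Module.finrank F (LinearMap.range X.mulVecLin) := rfl
  have hr2 : (W ^ 3).rank = Module.finrank F (LinearMap.range (W ^ 3).mulVecLin) := rfl
  omega
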